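/- Let μ ∈ (0, 1/2), and set γ = 2μ/(1+μ), M = 2/(1/2 − μ), δ = γ/M, and I(s) = ∫_s^∞ t^{δ−1}/(1+t^{2δ}) dt for s ≥ 0 (a finite, decreasing function). For A > 0 define h_A(s) = A·s^{−γ} + exp(A²·I(s)) for s > 0, so that h_A is positive and decreasing with −h_A'(s) = A·γ·s^{−γ−1} + A²·(s^{δ−1}/(1+s^{2δ}))·exp(A²·I(s)). Then for every K > 0 there exists A₀ > 0 such that for all A ≥ A₀, all s > 0, and all t ≥ 1: s·(−h_A'(s))/h_A(s)·t + h_A(s)²·s^{γ}·t^{−M} ≥ K. -/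

import Mathlib

open scoped Topology
open MeasureTheory Filter

private lemma gm_le_add (u v θ : ℝ) (hu : 0 ≤ u) (hv : 0 ≤ v) (h0 : 0 ≤ θ) (h1 : θ ≤ 1) :
    u ^ θ * v ^ (1 - θ) ≤ u + v := by
  have hm : 0 ≤ max u v := le_trans hu (le_max_left _ _)
  calc u ^ θ * v ^ (1 - θ)
      ≤ (max u v) ^ θ * (max u v) ^ (1 - θ) := by
        apply mul_le_mul (Real.rpow_le_rpow hu (le_max_left _ _) h0)
          (Real.rpow_le_rpow hv (le_max_right _ _) (by linarith))
          (Real.rpow_nonneg hv _) (Real.rpow_nonneg hm _)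
    _ = (max u v) ^ (θ + (1 - θ)) := (Real.rpow_add' hm (by norm_num)).symm
    _ = max u v := by rw [show θ + (1 - θ) = 1 by ring, Real.rpow_one]
    _ ≤ u + v := max_le (le_add_of_nonneg_right hv) (le_add_of_nonneg_left hu)

private lemma gm_t (a b t θ M : ℝ) (ha : 0 ≤ a) (hb : 0 ≤ b) (ht : 1 ≤ t)
    (hM : 0 < M) (hθ : θ = M / (M + 1)) :
    a ^ θ * b ^ (1 - θ) ≤ a * t + b * t ^ (-M) := by
  have ht0 : 0 < t := lt_of_lt_of_le one_pos ht
  have hM1 : (0:ℝ) < M + 1 := by linarith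
  have hθ0 : 0 ≤ θ := by rw [hθ]; positivity
  have hθ1 : θ ≤ 1 := by rw [hθ, div_le_one hM1]; linarith
  have h := gm_le_add (a * t) (b * t ^ (-M)) θ (by positivity) (by positivity) hθ0 hθ1
  have hz : θ + -M * (1 - θ) = 0 := by rw [hθ]; field_simp; ring
  have e : (a * t) ^ θ * (b * t ^ (-M)) ^ (1 - θ) = a ^ θ * b ^ (1 - θ) := by
    rw [Real.mul_rpow ha ht0.le, Real.mul_rpow hb (Real.rpow_nonneg ht0.le _),
      ← Real.rpow_mul ht0.le]
    calc a ^ θ * t ^ θ * (b ^ (1 - θ) * t ^ (-M * (1 - θ)))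
        = a ^ θ * b ^ (1 - θ) * (t ^ θ * t ^ (-M * (1 - θ))) := by ring
      _ = a ^ θ * b ^ (1 - θ) * t ^ (θ + -M * (1 - θ)) := by rw [← Real.rpow_add ht0]
      _ = a ^ θ * b ^ (1 - θ) := by rw [hz, Real.rpow_zero, mul_one]
  linarith [e ▸ h]

set_option maxHeartbeats 1000000 in
private lemma core_ineq (γ M δ θ : ℝ) (hγ : 0 < γ) (hM : 0 < M) (hδM : δ * M = γ)
    (hθ : θ = M / (M + 1)) (K A s t Ev : ℝ) (hA : 1 ≤ A) (hs : 0 < s) (ht : 1 ≤ t)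
    (hEv : 1 ≤ Ev)
    (hK1 : K ≤ γ ^ θ * A ^ (1 - θ)) (hK2 : K ≤ (A ^ 2 / 2) ^ θ) (hK3 : K ≤ A ^ 2 / 2) :
    K ≤ s * (A * γ * s ^ (-γ - 1) + A ^ 2 * (s ^ (δ - 1) / (1 + s ^ (2 * δ))) * Ev) /
          (A * s ^ (-γ) + Ev) * t +
        (A * s ^ (-γ) + Ev) ^ 2 * s ^ γ * t ^ (-M) := by
  have hA0 : (0:ℝ) < A := by linarith
  have ht0 : (0:ℝ) < t := by linarith
  have hEv0 : (0:ℝ) < Ev := by linarith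
  have hM1 : (0:ℝ) < M + 1 := by linarith
  have hθ0 : 0 ≤ θ := by rw [hθ]; positivity
  have hθ1 : θ ≤ 1 := by rw [hθ, div_le_one hM1]; linarith
  have hδ0 : 0 < δ := by
    have : δ = γ / M := by field_simp [ne_of_gt hM] at hδM ⊢; linarith
    rw [this]; positivity
  have hX : (0:ℝ) < A * s ^ (-γ) := by positivity
  have hden : (0:ℝ) < A * s ^ (-γ) + Ev := by positivity
  have h2δ : (0:ℝ) < 1 + s ^ (2 * δ) := by positivity
  obtain ⟨q, hqdef⟩ : ∃ q : ℝ, q = s ^ δ / (1 + s ^ (2 * δ)) := ⟨_, rfl⟩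
  have hq : 0 < q := hqdef ▸ div_pos (Real.rpow_pos_of_pos hs δ) h2δ
  -- numerator identity
  have e1 : s * s ^ (-γ - 1) = s ^ (-γ) := by
    have h := Real.rpow_add hs 1 (-γ - 1)
    rw [Real.rpow_one] at h
    rw [← h]; congr 1; ring
  have e2 : s * s ^ (δ - 1) = s ^ δ := by
    have h := Real.rpow_add hs 1 (δ - 1)
    rw [Real.rpow_one] at h
    rw [← h]; congr 1; ring
  have hnum : s * (A * γ * s ^ (-γ - 1) + A ^ 2 * (s ^ (δ - 1) / (1 + s ^ (2 * δ))) * Ev)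
      = γ * (A * s ^ (-γ)) + (A ^ 2 * q) * Ev := by
    rw [hqdef, ← e1, ← e2]; ring
  -- fraction lower bound
  have hfrac : min γ (A ^ 2 * q) ≤
      s * (A * γ * s ^ (-γ - 1) + A ^ 2 * (s ^ (δ - 1) / (1 + s ^ (2 * δ))) * Ev) /
        (A * s ^ (-γ) + Ev) := by
    rw [hnum, le_div_iff₀ hden]
    have h1 := mul_le_mul_of_nonneg_right (min_le_left γ (A ^ 2 * q)) hX.le
    have h2 := mul_le_mul_of_nonneg_right (min_le_right γ (A ^ 2 * q)) hEv0.le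
    nlinarith
  -- s^(-γ) * s^γ = 1
  have hss : s ^ (-γ) * s ^ γ = 1 := by
    rw [← Real.rpow_add hs]; norm_num
  -- b lower bounds
  have hb1 : A ≤ (A * s ^ (-γ) + Ev) ^ 2 * s ^ γ := by
    calc A ≤ 2 * A * Ev := by nlinarith
      _ = 2 * (A * s ^ (-γ)) * Ev * s ^ γ := by
          rw [show 2 * (A * s ^ (-γ)) * Ev * s ^ γ = 2 * A * Ev * (s ^ (-γ) * s ^ γ) by ring,
            hss, mul_one]
      _ ≤ (A * s ^ (-γ) + Ev) ^ 2 * s ^ γ := by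
          apply mul_le_mul_of_nonneg_right _ (Real.rpow_nonneg hs.le γ)
          nlinarith [sq_nonneg (A * s ^ (-γ) - Ev)]
  have hb2 : s ^ γ ≤ (A * s ^ (-γ) + Ev) ^ 2 * s ^ γ := by
    apply le_mul_of_one_le_left (Real.rpow_nonneg hs.le γ)
    nlinarith [hX, hEv, sq_nonneg (A * s ^ (-γ) + Ev - 1)]
  have hb3 : A ^ 2 * s ^ (-γ) ≤ (A * s ^ (-γ) + Ev) ^ 2 * s ^ γ := by
    have e3 : (A * s ^ (-γ)) ^ 2 * s ^ γ = A ^ 2 * s ^ (-γ) := by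
      rw [show (A * s ^ (-γ)) ^ 2 * s ^ γ = A ^ 2 * s ^ (-γ) * (s ^ (-γ) * s ^ γ) by ring,
        hss, mul_one]
    rw [← e3]
    apply mul_le_mul_of_nonneg_right _ (Real.rpow_nonneg hs.le γ)
    nlinarith
  -- exponent identity
  have hexp : δ * θ = γ * (1 - θ) := by
    rw [hθ]; field_simp; nlinarith [hδM]
  -- main chain: K ≤ α^θ * b^(1-θ) ≤ α t + b t^(-M) ≤ LHS, case split
  have tmnn : (0:ℝ) ≤ t ^ (-M) := Real.rpow_nonneg ht0.le _
  rcases le_total γ (A ^ 2 * q) with hcase | hcase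
  · -- α = γ, b = A
    have hmin : min γ (A ^ 2 * q) = γ := min_eq_left hcase
    calc K ≤ γ ^ θ * A ^ (1 - θ) := hK1
      _ ≤ γ * t + A * t ^ (-M) := gm_t γ A t θ M hγ.le hA0.le ht hM hθ
      _ ≤ _ := by
          apply add_le_add
          · apply mul_le_mul_of_nonneg_right _ ht0.le
            exact le_trans hmin.ge hfrac
          · exact mul_le_mul_of_nonneg_right hb1 tmnn
  · -- α = A^2 q
    have hmin : min γ (A ^ 2 * q) = A ^ 2 * q := min_eq_right hcase
    rcases le_total 1 s with hs1 | hs1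
    · -- s ≥ 1, b = s^γ
      have hqlb : A ^ 2 / 2 * s ^ (-δ) ≤ A ^ 2 * q := by
        have h1 : (1:ℝ) ≤ s ^ (2 * δ) := Real.one_le_rpow hs1 (by positivity)
        have h2 : s ^ δ / (2 * s ^ (2 * δ)) ≤ q := by
          rw [hqdef]
          apply div_le_div_of_nonneg_left (Real.rpow_nonneg hs.le δ) h2δ
          linarith
        have h3 : s ^ δ / (2 * s ^ (2 * δ)) = s ^ (-δ) / 2 := by
          rw [show s ^ (-δ) = s ^ δ / s ^ (2 * δ) by
            rw [← Real.rpow_sub hs]; congr 1; ring]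
          ring
        nlinarith
      have key : (A ^ 2 / 2 * s ^ (-δ)) ^ θ * (s ^ γ) ^ (1 - θ) = (A ^ 2 / 2) ^ θ := by
        rw [Real.mul_rpow (by positivity) (Real.rpow_nonneg hs.le _),
          ← Real.rpow_mul hs.le, ← Real.rpow_mul hs.le, mul_assoc,
          ← Real.rpow_add hs, show -δ * θ + γ * (1 - θ) = 0 by linarith [hexp],
          Real.rpow_zero, mul_one]
      calc K ≤ (A ^ 2 / 2) ^ θ := hK2
        _ = (A ^ 2 / 2 * s ^ (-δ)) ^ θ * (s ^ γ) ^ (1 - θ) := key.symm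
        _ ≤ (A ^ 2 * q) ^ θ * (s ^ γ) ^ (1 - θ) := by
            apply mul_le_mul_of_nonneg_right
              (Real.rpow_le_rpow (by positivity) hqlb hθ0)
              (Real.rpow_nonneg (Real.rpow_nonneg hs.le γ) _)
        _ ≤ (A ^ 2 * q) * t + s ^ γ * t ^ (-M) :=
            gm_t _ _ t θ M (by positivity) (Real.rpow_nonneg hs.le γ) ht hM hθ
        _ ≤ _ := by
            apply add_le_add
            · apply mul_le_mul_of_nonneg_right _ ht0.le
              exact le_trans hmin.ge hfrac
            · exact mul_le_mul_of_nonneg_right hb2 tmnn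
    · -- s ≤ 1, b = A^2 s^(-γ)
      have hqlb : A ^ 2 / 2 * s ^ δ ≤ A ^ 2 * q := by
        have h1 : s ^ (2 * δ) ≤ 1 := Real.rpow_le_one hs.le hs1 (by positivity)
        have h2 : s ^ δ / 2 ≤ q := by
          rw [hqdef]
          apply div_le_div_of_nonneg_left (Real.rpow_nonneg hs.le δ) h2δ
          linarith
        nlinarith
      have key : (A ^ 2 / 2 * s ^ δ) ^ θ * (A ^ 2 * s ^ (-γ)) ^ (1 - θ)
          = (A ^ 2 / 2) ^ θ * (A ^ 2) ^ (1 - θ) := by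
        rw [Real.mul_rpow (by positivity) (Real.rpow_nonneg hs.le _),
          Real.mul_rpow (by positivity) (Real.rpow_nonneg hs.le _),
          ← Real.rpow_mul hs.le, ← Real.rpow_mul hs.le,
          show (A ^ 2 / 2) ^ θ * s ^ (δ * θ) * ((A ^ 2) ^ (1 - θ) * s ^ (-γ * (1 - θ)))
            = (A ^ 2 / 2) ^ θ * (A ^ 2) ^ (1 - θ) * (s ^ (δ * θ) * s ^ (-γ * (1 - θ))) by ring,
          ← Real.rpow_add hs, show δ * θ + -γ * (1 - θ) = 0 by linarith [hexp],
          Real.rpow_zero, mul_one]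
      have key2 : A ^ 2 / 2 ≤ (A ^ 2 / 2) ^ θ * (A ^ 2) ^ (1 - θ) := by
        have h1 : (A ^ 2 / 2) ^ (1 - θ) ≤ (A ^ 2) ^ (1 - θ) :=
          Real.rpow_le_rpow (by positivity) (by nlinarith) (by linarith)
        have h2 : (A ^ 2 / 2) ^ θ * (A ^ 2 / 2) ^ (1 - θ) = A ^ 2 / 2 := by
          rw [← Real.rpow_add (by positivity), show θ + (1 - θ) = 1 by ring, Real.rpow_one]
        nlinarith [Real.rpow_nonneg (show (0:ℝ) ≤ A ^ 2 / 2 by positivity) θ]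
      calc K ≤ A ^ 2 / 2 := hK3
        _ ≤ (A ^ 2 / 2) ^ θ * (A ^ 2) ^ (1 - θ) := key2
        _ = (A ^ 2 / 2 * s ^ δ) ^ θ * (A ^ 2 * s ^ (-γ)) ^ (1 - θ) := key.symm
        _ ≤ (A ^ 2 * q) ^ θ * (A ^ 2 * s ^ (-γ)) ^ (1 - θ) := by
            apply mul_le_mul_of_nonneg_right
              (Real.rpow_le_rpow (by positivity) hqlb hθ0)
              (Real.rpow_nonneg (by positivity) _)
        _ ≤ (A ^ 2 * q) * t + (A ^ 2 * s ^ (-γ)) * t ^ (-M) :=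
            gm_t _ _ t θ M (by positivity) (by positivity) ht hM hθ
        _ ≤ _ := by
            apply add_le_add
            · apply mul_le_mul_of_nonneg_right _ ht0.le
              exact le_trans hmin.ge hfrac
            · exact mul_le_mul_of_nonneg_right hb3 tmnn

private lemma exists_A0 (γ M δ : ℝ) (hγ : 0 < γ) (hM : 0 < M) (hδM : δ * M = γ)
    (I : ℝ → ℝ) (hI : ∀ s, 0 < s → 0 ≤ I s) :
    ∀ K > (0:ℝ), ∃ A₀ > (0:ℝ), ∀ A ≥ A₀, ∀ s > (0:ℝ), ∀ t ≥ (1:ℝ),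
      s * (A * γ * s ^ (-γ - 1) +
            A ^ 2 * (s ^ (δ - 1) / (1 + s ^ (2 * δ))) * Real.exp (A ^ 2 * I s)) /
          (A * s ^ (-γ) + Real.exp (A ^ 2 * I s)) * t +
        (A * s ^ (-γ) + Real.exp (A ^ 2 * I s)) ^ 2 * s ^ γ * t ^ (-M) ≥ K := by
  intro K hK
  have hM1 : (0:ℝ) < M + 1 := by linarith
  set θ : ℝ := M / (M + 1) with hθ
  have hθ0 : 0 < θ := by positivity
  have hθ1 : θ < 1 := by rw [hθ, div_lt_one hM1]; linarith
  have t3 : Tendsto (fun A : ℝ => A ^ 2 / 2) atTop atTop :=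
    (tendsto_pow_atTop two_ne_zero).atTop_div_const two_pos
  have t2 : Tendsto (fun A : ℝ => (A ^ 2 / 2) ^ θ) atTop atTop :=
    (tendsto_rpow_atTop hθ0).comp t3
  have t1 : Tendsto (fun A : ℝ => γ ^ θ * A ^ (1 - θ)) atTop atTop :=
    (tendsto_rpow_atTop (by linarith)).const_mul_atTop (Real.rpow_pos_of_pos hγ θ)
  have ev : ∀ᶠ A : ℝ in atTop, K ≤ γ ^ θ * A ^ (1 - θ) ∧ K ≤ (A ^ 2 / 2) ^ θ ∧
      K ≤ A ^ 2 / 2 ∧ 1 ≤ A :=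
    ((t1.eventually_ge_atTop K).and ((t2.eventually_ge_atTop K).and
      ((t3.eventually_ge_atTop K).and (eventually_ge_atTop 1))))
  obtain ⟨A₀, hA₀⟩ := eventually_atTop.mp ev
  refine ⟨max A₀ 1, lt_of_lt_of_le one_pos (le_max_right _ _), ?_⟩
  intro A hA s hs t ht
  obtain ⟨c1, c2, c3, c4⟩ := hA₀ A (le_trans (le_max_left _ _) hA)
  have hEv : 1 ≤ Real.exp (A ^ 2 * I s) :=
    Real.one_le_exp (mul_nonneg (by positivity) (hI s hs))
  exact core_ineq γ M δ θ hγ hM hδM hθ K A s t _ c4 hs ht hEv c1 c2 c3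

/-- The supersolution re-stacking inequality: with `γ = 2μ/(1+μ)`, `M = 2/(1/2-μ)`,
`δ = γ/M`, `I(s) = ∫_s^∞ t^(δ-1)/(1+t^(2δ)) dt`, and
`h_A(s) = A s^(-γ) + exp(A² I(s))` (whose negative derivative is
`Aγ s^(-γ-1) + A² (s^(δ-1)/(1+s^(2δ))) exp(A² I(s))`), for every `K > 0` there is
`A₀ > 0` such that for all `A ≥ A₀`, `s > 0`, `t ≥ 1`:
`s·(-h_A')/h_A·t + h_A²·s^γ·t^(-M) ≥ K`. -/
theorem supersolution_stacking_inequality (μ : ℝ) (hμ : 0 < μ) (hμ' : μ < 1 / 2) :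
    let γ : ℝ := 2 * μ / (1 + μ)
    let M : ℝ := 2 / (1 / 2 - μ)
    let δ : ℝ := γ / M
    let I : ℝ → ℝ := fun s => ∫ t in Set.Ioi s, t ^ (δ - 1) / (1 + t ^ (2 * δ))
    ∀ K > (0 : ℝ), ∃ A₀ > (0 : ℝ), ∀ A ≥ A₀, ∀ s > (0 : ℝ), ∀ t ≥ (1 : ℝ),
      s * (A * γ * s ^ (-γ - 1) +
            A ^ 2 * (s ^ (δ - 1) / (1 + s ^ (2 * δ))) * Real.exp (A ^ 2 * I s)) /
          (A * s ^ (-γ) + Real.exp (A ^ 2 * I s)) * t +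
        (A * s ^ (-γ) + Real.exp (A ^ 2 * I s)) ^ 2 * s ^ γ * t ^ (-M) ≥ K := by
  intro γ M δ I
  have hγ : 0 < γ := div_pos (by linarith) (by linarith)
  have hM : 0 < M := div_pos (by norm_num) (by linarith)
  have hδM : δ * M = γ := div_mul_cancel₀ _ (ne_of_gt hM)
  have hI : ∀ s, 0 < s → 0 ≤ I s := by
    intro s hs
    apply setIntegral_nonneg measurableSet_Ioi
    intro x hx
    have hx0 : 0 < x := hs.trans hx
    positivity
  exact exists_A0 γ M δ hγ hM hδM I hI
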